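/- For every d ≥ 1 and every subset A ⊆ K, the cut function h' of the noise sparsifier H for G_d satisfies the exact identity h'(A) = (k·√d/4) · (1 − NS_ρ(f_A)), where ρ = 1 − 1/√d and k = 2^d. -/
import Mathlib


open Finset

/-- Vertices of the `d`-dimensional Boolean hypercube. -/
abbrev Cube (d : ℕ) := Fin d → Bool

/-- Hamming distance between two Boolean strings. -/
def hamm {d : ℕ} (s t : Cube d) : ℕ := (Finset.univ.filter fun i => s i ≠ t i).card

/-- The vertex set of the graph `G_d`: `Sum.inl s` is the hypercube vertex `y_s`,
`Sum.inr s` is the terminal `z_s`. -/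
abbrev Vtx (d : ℕ) := Cube d ⊕ Cube d

/-- Edge capacities of the graph `G_d`: hypercube edges (Hamming distance `1`) have
capacity `1`, each terminal `z_s` is attached to `y_s` by an edge of capacity `√d`. -/
noncomputable def gCap (d : ℕ) : Vtx d → Vtx d → ℝ
  | Sum.inl s, Sum.inl t => if hamm s t = 1 then 1 else 0
  | Sum.inl s, Sum.inr t => if s = t then Real.sqrt d else 0
  | Sum.inr s, Sum.inl t => if s = t then Real.sqrt d else 0
  | Sum.inr _, Sum.inr _ => 0

/-- The cut function of a capacitated graph: total capacity of edges crossing `A`.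
(Each unordered crossing edge `{u,v}` with `u ∈ A`, `v ∉ A` is counted once.) -/
noncomputable def cutFun {V : Type*} [Fintype V] [DecidableEq V]
    (c : V → V → ℝ) (A : Finset V) : ℝ :=
  ∑ u ∈ A, ∑ v ∈ Aᶜ, c u v

/-- The terminal set `K = {z_s}` of `G_d`. -/
def Kset (d : ℕ) : Finset (Vtx d) := Finset.univ.image Sum.inr

/-- The terminal cut function: `h_K(U) = min { h(A) : A ∩ K = U }`. -/
noncomputable def termCut {V : Type*} [Fintype V] [DecidableEq V]
    (c : V → V → ℝ) (K U : Finset V) : ℝ :=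
  sInf {x : ℝ | ∃ A : Finset V, A ∩ K = U ∧ cutFun c A = x}

/-- The terminal cut function of `G_d`, for a set `A` of terminals (identified with
Boolean strings). -/
noncomputable def hK (d : ℕ) (A : Finset (Cube d)) : ℝ :=
  termCut (gCap d) (Kset d) (A.image Sum.inr)

/-- The flip probability `p = (1 - ρ)/2` where `ρ = 1 - 1/√d`. -/
noncomputable def noiseP (d : ℕ) : ℝ := (1 - (1 - 1 / Real.sqrt d)) / 2

/-- Capacities of the noise sparsifier `H`:
`c_H(z_s, z_t) = √d · p^{Hamm(s,t)} · (1-p)^{d - Hamm(s,t)}` for `s ≠ t`. -/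
noncomputable def noiseCap (d : ℕ) (s t : Cube d) : ℝ :=
  if s = t then 0
  else Real.sqrt d * noiseP d ^ hamm s t * (1 - noiseP d) ^ (d - hamm s t)

/-- The character `χ_S(x) = Π_{i ∈ S} x_i`, with the Boolean value `true`
interpreted as `-1` and `false` as `+1`. -/
def chi {d : ℕ} (S : Finset (Fin d)) (x : Cube d) : ℝ := ∏ i ∈ S, (if x i then -1 else 1)

/-- The Fourier coefficient `f̂_S = E_x [f(x) χ_S(x)]`. -/
noncomputable def fCoeff {d : ℕ} (f : Cube d → ℝ) (S : Finset (Fin d)) : ℝ :=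
  (∑ x : Cube d, f x * chi S x) / 2 ^ d

/-- The `±1`-valued indicator function of a set `A` of terminals. -/
def fA {d : ℕ} (A : Finset (Cube d)) : Cube d → ℝ := fun s => if s ∈ A then 1 else -1

/-- Noise stability `NS_ρ(f) = E_{x, y ∼_ρ x}[f(x) f(y)]`, where `y` is obtained from
the uniformly random `x` by independently flipping each coordinate with probability
`(1-ρ)/2`. -/
noncomputable def noiseStab (d : ℕ) (ρ : ℝ) (f : Cube d → ℝ) : ℝ :=
  (∑ x : Cube d, ∑ y : Cube d,
    ((1 - ρ) / 2) ^ hamm x y * ((1 + ρ) / 2) ^ (d - hamm x y) * f x * f y) / 2 ^ d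


private lemma hamm_symm {d : ℕ} (x y : Cube d) : hamm x y = hamm y x := by
  unfold hamm; congr 1; ext i; simp [ne_comm]

private lemma weight_prod {d : ℕ} (p : ℝ) (x y : Cube d) :
    p ^ hamm x y * (1 - p) ^ (d - hamm x y) =
      ∏ i, (if x i = y i then (1 : ℝ) - p else p) := by
  classical
  rw [Finset.prod_ite, Finset.prod_const, Finset.prod_const]
  have h := Finset.card_filter_add_card_filter_not
    (s := (Finset.univ : Finset (Fin d))) (p := fun i => x i = y i)
  simp only [Finset.card_univ, Fintype.card_fin] at h
  have hcard : (Finset.univ.filter fun i => ¬ x i = y i).card = hamm x y := by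
    unfold hamm; congr 1
  have h2 : (Finset.univ.filter fun i => x i = y i).card = d - hamm x y := by omega
  rw [hcard, h2, mul_comm]

private lemma weight_sum_one {d : ℕ} (p : ℝ) (x : Cube d) :
    ∑ y : Cube d, p ^ hamm x y * (1 - p) ^ (d - hamm x y) = 1 := by
  classical
  have := (Fintype.prod_sum (ι := Fin d) (κ := fun _ => Bool)
    (f := fun i b => if x i = b then (1 : ℝ) - p else p)).symm
  calc ∑ y : Cube d, p ^ hamm x y * (1 - p) ^ (d - hamm x y)
      = ∑ y : Cube d, ∏ i, (if x i = y i then (1 : ℝ) - p else p) := by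
        exact Finset.sum_congr rfl fun y _ => weight_prod p x y
    _ = ∏ i, ∑ b : Bool, (if x i = b then (1 : ℝ) - p else p) := this
    _ = 1 := by
        rw [← Finset.prod_const_one (s := (Finset.univ : Finset (Fin d)))]
        refine Finset.prod_congr rfl fun i _ => ?_
        cases h : x i <;> simp [Fintype.sum_bool, h]

/-- For every `d ≥ 1` and every `A ⊆ K`, the cut function of the noise
sparsifier satisfies `h'(A) = (k √d / 4) · (1 - NS_ρ(f_A))` with `ρ = 1 - 1/√d`. -/
theorem noise_sparsifier_cut_eq_noise_stability (d : ℕ) (hd : 1 ≤ d) (A : Finset (Cube d)) :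
    cutFun (noiseCap d) A =
      (2 ^ d * Real.sqrt d / 4) * (1 - noiseStab d (1 - 1 / Real.sqrt d) (fA A)) := by
  classical
  set p := noiseP d with hp
  set ρ := 1 - 1 / Real.sqrt d with hρ
  have hdpos : (0 : ℝ) < Real.sqrt d := Real.sqrt_pos.mpr (by exact_mod_cast hd)
  set w : Cube d → Cube d → ℝ :=
    fun x y => p ^ hamm x y * (1 - p) ^ (d - hamm x y) with hw
  have hwsymm : ∀ x y, w x y = w y x := by
    intro x y; simp [hw, hamm_symm x y]
  have h1 : (1 - ρ) / 2 = p := rfl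
  have h2 : (1 + ρ) / 2 = 1 - p := by
    rw [hp]; unfold noiseP; rw [hρ]; ring
  -- rewrite noiseStab
  have hNS : noiseStab d ρ (fA A) =
      (∑ x : Cube d, ∑ y : Cube d, w x y * fA A x * fA A y) / 2 ^ d := by
    unfold noiseStab; rw [h1, h2]
  -- split sums
  set SAA := ∑ x ∈ A, ∑ y ∈ A, w x y with hSAA
  set SAC := ∑ x ∈ A, ∑ y ∈ Aᶜ, w x y with hSAC
  set SCA := ∑ x ∈ Aᶜ, ∑ y ∈ A, w x y with hSCA
  set SCC := ∑ x ∈ Aᶜ, ∑ y ∈ Aᶜ, w x y with hSCC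
  have hsym : SCA = SAC := by
    rw [hSCA, hSAC, Finset.sum_comm]
    exact Finset.sum_congr rfl fun x _ => Finset.sum_congr rfl fun y _ => hwsymm y x
  have hsplit : ∀ g : Cube d → Cube d → ℝ,
      ∑ x : Cube d, ∑ y : Cube d, g x y =
        (∑ x ∈ A, ∑ y ∈ A, g x y) + (∑ x ∈ A, ∑ y ∈ Aᶜ, g x y)
        + ((∑ x ∈ Aᶜ, ∑ y ∈ A, g x y) + (∑ x ∈ Aᶜ, ∑ y ∈ Aᶜ, g x y)) := by
    intro g
    rw [← Finset.sum_add_sum_compl A (fun x => ∑ y : Cube d, g x y)]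
    have inner : ∀ x, ∑ y : Cube d, g x y = ∑ y ∈ A, g x y + ∑ y ∈ Aᶜ, g x y :=
      fun x => (Finset.sum_add_sum_compl A (g x)).symm
    simp_rw [inner]
    rw [Finset.sum_add_distrib, Finset.sum_add_distrib]
  have htot : ∑ x : Cube d, ∑ y : Cube d, w x y = 2 ^ d := by
    have : ∀ x : Cube d, ∑ y : Cube d, w x y = 1 := fun x => weight_sum_one p x
    simp [this, Finset.card_univ]
  have hffA : ∀ x ∈ A, fA A x = 1 := fun x hx => by simp [fA, hx]
  have hffC : ∀ x ∈ Aᶜ, fA A x = -1 := fun x hx => by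
    simp [fA, (Finset.mem_compl.mp hx)]
  have hkey : ∑ x : Cube d, ∑ y : Cube d, w x y * fA A x * fA A y
      = SAA - SAC - SCA + SCC := by
    rw [hsplit (fun x y => w x y * fA A x * fA A y)]
    have eAA : ∑ x ∈ A, ∑ y ∈ A, w x y * fA A x * fA A y = SAA :=
      Finset.sum_congr rfl fun x hx => Finset.sum_congr rfl fun y hy => by
        rw [hffA x hx, hffA y hy]; ring
    have eAC : ∑ x ∈ A, ∑ y ∈ Aᶜ, w x y * fA A x * fA A y = -SAC := by
      rw [hSAC, ← Finset.sum_neg_distrib]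
      exact Finset.sum_congr rfl fun x hx => by
        rw [← Finset.sum_neg_distrib]
        exact Finset.sum_congr rfl fun y hy => by
          rw [hffA x hx, hffC y hy]; ring
    have eCA : ∑ x ∈ Aᶜ, ∑ y ∈ A, w x y * fA A x * fA A y = -SCA := by
      rw [hSCA, ← Finset.sum_neg_distrib]
      exact Finset.sum_congr rfl fun x hx => by
        rw [← Finset.sum_neg_distrib]
        exact Finset.sum_congr rfl fun y hy => by
          rw [hffC x hx, hffA y hy]; ring
    have eCC : ∑ x ∈ Aᶜ, ∑ y ∈ Aᶜ, w x y * fA A x * fA A y = SCC :=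
      Finset.sum_congr rfl fun x hx => Finset.sum_congr rfl fun y hy => by
        rw [hffC x hx, hffC y hy]; ring
    rw [eAA, eAC, eCA, eCC]; ring
  have htot2 : SAA + SAC + (SCA + SCC) = 2 ^ d := by
    rw [hSAA, hSAC, hSCA, hSCC, ← hsplit w, htot]
  -- cut function
  have hcut : cutFun (noiseCap d) A = Real.sqrt d * SAC := by
    unfold cutFun
    rw [hSAC, Finset.mul_sum]
    refine Finset.sum_congr rfl fun x hx => ?_
    rw [Finset.mul_sum]
    refine Finset.sum_congr rfl fun y hy => ?_
    have hne : x ≠ y := fun h =>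
      (Finset.mem_compl.mp hy) (h ▸ hx)
    simp only [noiseCap, hne, if_false, hw]
    ring
  rw [hcut, hNS, hkey, hsym]
  have hs : SAA - SAC - SAC + SCC = 2 ^ d - 4 * SAC := by
    rw [hsym] at htot2; linarith
  rw [hs]
  have h2d : (2 : ℝ) ^ d ≠ 0 := by positivity
  field_simp
  ring
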